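/- With the notation of Theorem 1 (shrinking procedure data for a centered polytope Δ with M ≥ 1 dimension drops before the final one): Δ = ⋂_{k=0}^N Δ̃ⁿ_k ∩ ⋂_{j=1}^M (Δ̃^{k₁+...+k_j} × ℝ^{n−(k₁+...+k_j)}), where Δ̃^{k₁+...+k_j} = ⋂_{i ∈ D₁∪...∪D_j} {y ∈ ℝ^{k₁+...+k_j} : ⟨y, π_j^⊥(v_i)⟩ ≤ t_j} and Δ̃ⁿ_0, Δ̃ⁿ_k are defined as in the M = 0 case. -/
import Mathlib


open Matrix

/-- Theorem 1, case `M ≥ 1`: with dimension-drop times `t₁ < … < t_{M+1}`,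
`D_j = {i | λᵢ = t_j}`, partial-dimension sums `s j = k₁ + … + k_{j+1}` (so
`s (last) = n`), normals of frozen facets lying in `ℝ^{s j} × {0}`, and remaining
constraint values `μ_k > t_{M+1}`, the polytope `Δ` equals the intersection of the
monotone polytopes `Δ̃ⁿ_k` (`k = 0, …, N`, the index `j = last` below giving `Δ̃ⁿ_0`)
with the cylinders `Δ̃^{k₁+…+k_j} × ℝ^{n-(k₁+…+k_j)}` (`j = 1, …, M`), where the `j`-th
cylinder is cut out by the projected normals `π_j^⊥(vᵢ)`, `i ∈ D₁ ∪ … ∪ D_j`, with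
constant `t_j`. -/
theorem stmt8 (n d M N : ℕ) (hM : 1 ≤ M)
    (v : Fin d → Fin n → ℝ) (lam : Fin d → ℝ)
    (t : Fin (M + 1) → ℝ) (ht : StrictMono t) (ht0 : 0 < t 0)
    (μ : Fin N → ℝ) (hμ : StrictMono μ) (htμ : ∀ k, t (Fin.last M) < μ k)
    (hpart : ∀ i, (∃ j, lam i = t j) ∨ ∃ k, lam i = μ k)
    (s : Fin (M + 1) → ℕ) (hs : StrictMono s) (hs0 : 0 < s 0)
    (hslast : s (Fin.last M) = n)
    (hv : ∀ (j : Fin (M + 1)) (i : Fin d), (∃ j' ≤ j, lam i = t j') →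
      ∀ l : Fin n, s j ≤ (l : ℕ) → v i l = 0) :
    {x : Fin n → ℝ | ∀ i, x ⬝ᵥ v i ≤ lam i} =
      (⋂ k : Fin N,
        {x : Fin n → ℝ | ∀ i, ((∃ j, lam i = t j) ∨ lam i = μ k) → x ⬝ᵥ v i ≤ μ k}) ∩
      (⋂ j : Fin (M + 1),
        {x : Fin n → ℝ | ∀ i, (∃ j' ≤ j, lam i = t j') →
          (∑ l : Fin n, (if (l : ℕ) < s j then x l else 0) * v i l) ≤ t j}) := by
  have key : ∀ (x : Fin n → ℝ) (j : Fin (M + 1)) (i : Fin d), (∃ j' ≤ j, lam i = t j') →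
      (∑ l : Fin n, (if (l : ℕ) < s j then x l else 0) * v i l) = x ⬝ᵥ v i := by
    intro x j i hi
    rw [dotProduct]
    refine Finset.sum_congr rfl fun l _ => ?_
    by_cases h : (l : ℕ) < s j
    · simp [h]
    · rw [hv j i hi l (le_of_not_gt h), if_neg h, mul_zero, mul_zero]
  ext x
  simp only [Set.mem_setOf_eq, Set.mem_inter_iff, Set.mem_iInter]
  constructor
  · intro hx
    refine ⟨fun k i hi => ?_, fun j i hi => ?_⟩
    · rcases hi with ⟨j, hj⟩ | hk
      · refine (hx i).trans ?_
        rw [hj]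
        exact ((ht.monotone (Fin.le_last j)).trans_lt (htμ k)).le
      · exact hk ▸ hx i
    · obtain ⟨j', hj', hji⟩ := hi
      rw [key x j i ⟨j', hj', hji⟩]
      exact (hx i).trans (hji ▸ ht.monotone hj')
  · rintro ⟨h1, h2⟩ i
    rcases hpart i with ⟨j, hj⟩ | ⟨k, hk⟩
    · have h := h2 j i ⟨j, le_refl j, hj⟩
      rw [key x j i ⟨j, le_refl j, hj⟩] at h
      exact hj ▸ h
    · exact hk ▸ h1 k i (Or.inr hk)
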